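/- Let p be a prime and let a, b, c, s be natural numbers with a = c · p^s and b ≤ a. If p^s divides b, then C(a,b) ≡ C(c, b / p^s) (mod p). -/

import Mathlib

lemma aux_div_mod_zero (p x s i : ℕ) (hp : 0 < p) (hi : i < s) :
    x * p ^ s / p ^ i % p = 0 := by
  rw [Nat.mul_div_assoc x (pow_dvd_pow p hi.le), Nat.pow_div hi.le hp,
    show s - i = (s - i - 1) + 1 by omega, pow_succ, ← mul_assoc]
  exact Nat.mul_mod_left _ _

/-- If `p` is prime, `a = c * p ^ s`, `b ≤ a` and `p ^ s ∣ b`, then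
`C(a, b) ≡ C(c, b / p ^ s) (mod p)`. -/
theorem stmt4 (p a b c s : ℕ) (hp : p.Prime) (ha : a = c * p ^ s) (hb : b ≤ a)
    (h : p ^ s ∣ b) :
    Nat.choose a b ≡ Nat.choose c (b / p ^ s) [MOD p] := by
  haveI : Fact p.Prime := ⟨hp⟩
  obtain ⟨d, hd⟩ := h
  have hppos : 0 < p := hp.pos
  have hpow : 0 < p ^ s := pow_pos hppos s
  have hmain := Choose.choose_modEq_choose_mul_prod_range_choose (n := a) (k := b) (p := p) s
  have ha' : a / p ^ s = c := by rw [ha, Nat.mul_div_cancel _ hpow]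
  have hb' : b / p ^ s = d := by rw [hd, Nat.mul_div_cancel_left _ hpow]
  have hprod : ∀ i ∈ Finset.range s,
      Nat.choose (a / p ^ i % p) (b / p ^ i % p) = 1 := by
    intro i hi
    rw [Finset.mem_range] at hi
    rw [ha, hd, mul_comm (p ^ s) d, aux_div_mod_zero p c s i hppos hi,
      aux_div_mod_zero p d s i hppos hi]
    simp
  rw [Finset.prod_congr rfl hprod, Finset.prod_const_one, Nat.cast_one, mul_one,
    ha', hb'] at hmain
  rw [hb', ← Int.natCast_modEq_iff]
  exact_mod_cast hmain
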